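/- Let 0 ∈ B ⊆ A ⊂ ℤ^n with ⟨A⟩_ℤ = ℤ^n and B* = B\{0} consisting of n linearly independent vectors. Then there exist reals r_b ≥ 0 (b ∈ B*) such that every lattice point of the form ∑_{b∈B*} x_b b with all x_b ≥ r_b lies in P(A). -/

import Mathlib

/-- Nonnegative integer combinations of the elements of a finite set of vectors. -/
def PV {n : ℕ} (A : Finset (Fin n → ℤ)) : Set (Fin n → ℤ) :=
  {x | ∃ c : (Fin n → ℤ) → ℕ, ∑ a ∈ A, (c a : ℤ) • a = x}

/-- Coordinatewise cast of an integer vector to a real vector. -/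
def castVec {n : ℕ} (v : Fin n → ℤ) : Fin n → ℝ := fun i => (v i : ℝ)

lemma PV_zero {n : ℕ} (A : Finset (Fin n → ℤ)) : (0 : Fin n → ℤ) ∈ PV A :=
  ⟨fun _ => 0, by simp⟩

lemma PV_add {n : ℕ} {A : Finset (Fin n → ℤ)} {x y : Fin n → ℤ}
    (hx : x ∈ PV A) (hy : y ∈ PV A) : x + y ∈ PV A := by
  obtain ⟨c, hc⟩ := hx
  obtain ⟨d, hd⟩ := hy
  refine ⟨fun a => c a + d a, ?_⟩
  rw [← hc, ← hd, ← Finset.sum_add_distrib]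
  refine Finset.sum_congr rfl fun a _ => ?_
  push_cast
  rw [add_smul]

lemma PV_mem {n : ℕ} {A : Finset (Fin n → ℤ)} {a : Fin n → ℤ} (ha : a ∈ A) :
    a ∈ PV A := by
  classical
  refine ⟨fun u => if u = a then 1 else 0, ?_⟩
  rw [Finset.sum_eq_single a]
  · simp
  · intro b _ hb; simp [hb]
  · intro h; exact absurd ha h

lemma PV_nsmul {n : ℕ} {A : Finset (Fin n → ℤ)} {x : Fin n → ℤ} (k : ℕ)
    (hx : x ∈ PV A) : k • x ∈ PV A := by
  obtain ⟨c, hc⟩ := hx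
  refine ⟨fun a => k * c a, ?_⟩
  rw [← hc, Finset.smul_sum]
  refine Finset.sum_congr rfl fun a _ => ?_
  push_cast
  rw [mul_smul, Nat.cast_smul_eq_nsmul]

lemma PV_sum {n : ℕ} {A : Finset (Fin n → ℤ)} {ι : Type*} (s : Finset ι)
    (g : ι → Fin n → ℤ) (h : ∀ i ∈ s, g i ∈ PV A) : ∑ i ∈ s, g i ∈ PV A := by
  classical
  induction s using Finset.induction_on with
  | empty => simpa using PV_zero A
  | insert _ _ hnotmem ih =>
    rename_i a s
    rw [Finset.sum_insert hnotmem]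
    exact PV_add (h a (Finset.mem_insert_self a s))
      (ih fun i hi => h i (Finset.mem_insert_of_mem hi))

open Matrix

lemma castVec_sub {n : ℕ} (u w : Fin n → ℤ) :
    castVec (u - w) = castVec u - castVec w := by
  funext i; simp [castVec]

theorem stmt17 (n : ℕ) (A B : Finset (Fin n → ℤ)) (h0 : (0 : Fin n → ℤ) ∈ B)
    (hBA : B ⊆ A)
    (hspan : Submodule.span ℤ (A : Set (Fin n → ℤ)) = ⊤)
    (hcard : (B.erase 0).card = n)
    (hind : ∀ c : (Fin n → ℤ) → ℤ,
      ∑ v ∈ B.erase 0, c v • v = 0 → ∀ v ∈ B.erase 0, c v = 0) :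
    ∃ r : (Fin n → ℤ) → ℝ, (∀ v ∈ B.erase 0, 0 ≤ r v) ∧
      ∀ (x : Fin n → ℤ) (c : (Fin n → ℤ) → ℝ),
        (∀ v ∈ B.erase 0, r v ≤ c v) →
        castVec x = ∑ v ∈ B.erase 0, c v • castVec v →
        x ∈ PV A := by
  classical
  set Bs := B.erase 0 with hBsdef
  have hBsA : Bs ⊆ A := fun v hv => hBA (Finset.erase_subset _ _ hv)
  -- enumeration of B*
  let e : Bs ≃ Fin n := Bs.equivFinOfCardEq hcard
  let β : Fin n → (Fin n → ℤ) := fun j => (e.symm j : Fin n → ℤ)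
  have hβmem : ∀ j, β j ∈ Bs := fun j => (e.symm j).2
  have hsum : ∀ {G : Type} [AddCommMonoid G] (F : (Fin n → ℤ) → G),
      ∑ v ∈ Bs, F v = ∑ j, F (β j) := by
    intro G _ F
    rw [← Finset.sum_coe_sort Bs F, ← Equiv.sum_comp e.symm (fun i : Bs => F i)]
  -- the matrix with columns β j
  let M : Matrix (Fin n) (Fin n) ℤ := Matrix.of fun i j => β j i
  have hMv : ∀ v : Fin n → ℤ, M *ᵥ v = ∑ j, v j • β j := by
    intro v
    funext i
    simp [M, Matrix.mulVec, dotProduct, Finset.sum_apply, mul_comm]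
  have hdet : M.det ≠ 0 := by
    intro h
    obtain ⟨v, hv0, hv⟩ := Matrix.exists_mulVec_eq_zero_iff.mpr h
    set c : (Fin n → ℤ) → ℤ := fun u => if h : u ∈ Bs then v (e ⟨u, h⟩) else 0 with hc
    have hcβ : ∀ j, c (β j) = v j := by
      intro j
      simp only [hc, dif_pos (hβmem j)]
      congr 1
      rw [show (⟨β j, hβmem j⟩ : Bs) = e.symm j from Subtype.ext rfl, Equiv.apply_symm_apply]
    have hzero : ∑ u ∈ Bs, c u • u = 0 := by
      rw [hsum (fun u => c u • u)]
      rw [show (∑ j, c (β j) • β j) = ∑ j, v j • β j from by simp [hcβ]]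
      rw [← hMv, hv]
    apply hv0
    funext j
    have := hind c hzero (β j) (hβmem j)
    rw [← hcβ j, this]; rfl
  -- the real matrix
  let MR : Matrix (Fin n) (Fin n) ℝ := M.map (Int.cast : ℤ → ℝ)
  have hdetR : MR.det ≠ 0 := by
    rw [show MR.det = ((M.det : ℤ) : ℝ) from (RingHom.map_det (Int.castRingHom ℝ) M).symm]
    exact_mod_cast hdet
  have hMRunit : IsUnit MR.det := isUnit_iff_ne_zero.mpr hdetR
  have hMRv : ∀ γ : Fin n → ℝ, MR *ᵥ γ = ∑ j, γ j • castVec (β j) := by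
    intro γ
    funext i
    simp [MR, M, Matrix.mulVec, dotProduct, Finset.sum_apply, castVec, mul_comm]
  have hinj : Function.Injective (fun γ => MR *ᵥ γ) := by
    intro a b h
    have := congrArg (fun w => MR⁻¹ *ᵥ w) h
    simpa [Matrix.mulVec_mulVec, Matrix.nonsing_inv_mul MR hMRunit] using this
  -- the index bound
  set D : ℕ := M.det.natAbs with hDdef
  have hD : 0 < D := Int.natAbs_pos.mpr hdet
  have spanL : ∀ v : Fin n → ℤ, ∃ m : Fin n → ℤ, (D : ℤ) • v = ∑ j, m j • β j := by
    intro v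
    rcases Int.natAbs_eq M.det with h | h
    · exact ⟨Matrix.cramer M v, by
        rw [← h, ← Matrix.mulVec_cramer M v, hMv]⟩
    · refine ⟨-Matrix.cramer M v, ?_⟩
      have : (D : ℤ) • v = -(M.det • v) := by
        rw [← neg_smul]; congr 1; omega
      rw [this, ← Matrix.mulVec_cramer M v, hMv, ← Finset.sum_neg_distrib]
      exact Finset.sum_congr rfl fun j _ => by simp
  -- decomposition into differences of PV elements
  have decomp : ∀ y : Fin n → ℤ, ∃ p q, p ∈ PV A ∧ q ∈ PV A ∧ y = p - q := by
    intro y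
    have hy : y ∈ Submodule.span ℤ (A : Set (Fin n → ℤ)) := by
      rw [hspan]; exact Submodule.mem_top
    obtain ⟨f, -, hf⟩ := Submodule.mem_span_finset.mp hy
    refine ⟨∑ a ∈ A, ((f a).toNat : ℤ) • a, ∑ a ∈ A, (((-f a).toNat : ℕ) : ℤ) • a,
      ⟨fun a => (f a).toNat, rfl⟩, ⟨fun a => (-f a).toNat, rfl⟩, ?_⟩
    rw [← Finset.sum_sub_distrib, ← hf]
    refine Finset.sum_congr rfl fun a _ => ?_
    rw [← sub_smul]
    congr 1
    omega
  -- residue representatives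
  haveI : Nonempty (Fin n → Fin D) := ⟨fun _ => ⟨0, hD⟩⟩
  let ιf : (Fin n → Fin D) → (Fin n → ℤ) := fun f i => ((f i : ℕ) : ℤ)
  have hYex : ∀ f : Fin n → Fin D, ∃ Y, Y ∈ PV A ∧
      ∃ m : Fin n → ℤ, ιf f - Y = ∑ j, m j • β j := by
    intro f
    obtain ⟨p, q, hp, hq, hpq⟩ := decomp (ιf f)
    obtain ⟨m', hm'⟩ := spanL q
    refine ⟨p + (D - 1) • q, PV_add hp (PV_nsmul _ hq), fun j => -m' j, ?_⟩
    have h1 : ιf f - (p + (D - 1) • q) = -((D : ℤ) • q) := by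
      rw [hpq]
      have : ((D - 1 : ℕ) • q : Fin n → ℤ) = ((D : ℤ) - 1) • q := by
        rw [← Nat.cast_smul_eq_nsmul ℤ]
        congr 1
        omega
      rw [this]
      module
    rw [h1, hm', ← Finset.sum_neg_distrib]
    exact Finset.sum_congr rfl fun j _ => by simp
  choose Y hYPV mY hmY using hYex
  -- real coordinates of the representatives
  let d : (Fin n → Fin D) → Fin n → ℝ := fun f => MR⁻¹ *ᵥ castVec (Y f)
  have hd : ∀ f, MR *ᵥ d f = castVec (Y f) := by
    intro f
    show MR *ᵥ (MR⁻¹ *ᵥ castVec (Y f)) = castVec (Y f)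
    rw [Matrix.mulVec_mulVec, Matrix.mul_nonsing_inv MR hMRunit, Matrix.one_mulVec]
  -- definition of r
  let r : (Fin n → ℤ) → ℝ := fun v =>
    if h : v ∈ Bs then max 0 (Finset.univ.sup' Finset.univ_nonempty
      (fun f : Fin n → Fin D => d f (e ⟨v, h⟩))) else 0
  have hr0 : ∀ v ∈ Bs, 0 ≤ r v := by
    intro v hv
    simp only [r, dif_pos hv]
    exact le_max_left _ _
  have hrd : ∀ (f : Fin n → Fin D) (j : Fin n), d f j ≤ r (β j) := by
    intro f j
    simp only [r, dif_pos (hβmem j)]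
    refine le_trans ?_ (le_max_right _ _)
    have : (⟨β j, hβmem j⟩ : Bs) = e.symm j := Subtype.ext rfl
    rw [this, Equiv.apply_symm_apply]
    exact Finset.le_sup' (fun f : Fin n → Fin D => d f j) (Finset.mem_univ f)
  refine ⟨r, hr0, ?_⟩
  intro x c hrc hx
  -- the residue of x
  have hres : ∀ i, (x i % (D : ℤ)).toNat < D := by
    intro i
    have h1 : 0 ≤ x i % (D : ℤ) := Int.emod_nonneg _ (by exact_mod_cast hD.ne')
    have h2 : x i % (D : ℤ) < D := Int.emod_lt_of_pos _ (by exact_mod_cast hD)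
    omega
  let res : Fin n → Fin D := fun i => ⟨(x i % (D : ℤ)).toNat, hres i⟩
  have hxι : x - ιf res = (D : ℤ) • fun i => x i / D := by
    funext i
    have h1 : 0 ≤ x i % (D : ℤ) := Int.emod_nonneg _ (by exact_mod_cast hD.ne')
    have h2 := Int.mul_ediv_add_emod (x i) (D : ℤ)
    simp only [Pi.sub_apply, Pi.smul_apply, smul_eq_mul, ιf, res]
    omega
  obtain ⟨m1, hm1⟩ := spanL (fun i => x i / D)
  set mt : Fin n → ℤ := fun j => m1 j + mY res j with hmt
  have hxY : x - Y res = ∑ j, mt j • β j := by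
    have : x - Y res = (x - ιf res) + (ιf res - Y res) := by ring
    rw [this, hxι, hm1, hmY res, ← Finset.sum_add_distrib]
    exact Finset.sum_congr rfl fun j _ => by rw [← add_smul]
  -- real coordinates comparison
  have hcastcomb : ∀ g : Fin n → ℤ, castVec (∑ j, g j • β j) =
      MR *ᵥ fun j => ((g j : ℤ) : ℝ) := by
    intro g
    funext i
    simp only [castVec, Finset.sum_apply, Pi.smul_apply, smul_eq_mul, hMRv,
      Finset.sum_apply]
    push_cast
    rfl
  have hγ : castVec x = MR *ᵥ fun j => c (β j) := by
    rw [hx, hsum (fun v => c v • castVec v), hMRv]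
  have hkey : (fun j => ((mt j : ℤ) : ℝ)) = fun j => c (β j) - d res j := by
    apply hinj
    show MR *ᵥ _ = MR *ᵥ _
    rw [← hcastcomb mt, ← hxY, castVec_sub, hγ,
      show (fun j => c (β j) - d res j) = (fun j => c (β j)) - d res from rfl,
      Matrix.mulVec_sub, hd res]
  have hmtnn : ∀ j, 0 ≤ mt j := by
    intro j
    have h1 : ((mt j : ℤ) : ℝ) = c (β j) - d res j := congrFun hkey j
    have h2 : d res j ≤ c (β j) :=
      le_trans (hrd res j) (hrc (β j) (hβmem j))
    have : (0 : ℝ) ≤ ((mt j : ℤ) : ℝ) := by rw [h1]; linarith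
    exact_mod_cast this
  -- conclusion
  have hxeq : x = Y res + ∑ j, ((mt j).toNat : ℕ) • β j := by
    have : (∑ j, ((mt j).toNat : ℕ) • β j) = ∑ j, mt j • β j := by
      refine Finset.sum_congr rfl fun j _ => ?_
      rw [← Nat.cast_smul_eq_nsmul ℤ]
      congr 1
      exact Int.toNat_of_nonneg (hmtnn j)
    rw [this, ← hxY]
    ring
  rw [hxeq]
  exact PV_add (hYPV res) (PV_sum Finset.univ _ fun j _ =>
    PV_nsmul _ (PV_mem (hBsA (hβmem j))))
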